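/- Let R = LaurentPolynomial ℤ with t = T 1 and t⁻¹ = T (-1). Let N be the R-submodule of R × R spanned by the three elements (1, t - 1), (-t, 1), and (1 - t⁻¹, t⁻¹). Then the quotient module (R × R) ⧸ N has exactly 3 elements, and moreover t • x = x + x for every element x of the quotient. -/

import Mathlib

open LaurentPolynomial

namespace Stmt7Aux

local notation "R" => LaurentPolynomial ℤ

noncomputable def ev : LaurentPolynomial ℤ →+* ZMod 3 :=
  ((AddMonoidAlgebra.lift ℤ (ZMod 3) ℤ)
    ((Units.coeHom (ZMod 3)).comp (zpowersHom (ZMod 3)ˣ (-1)))).toRingHom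

lemma ev_T1 : ev (T 1) = -1 := by
  show ((AddMonoidAlgebra.lift ℤ (ZMod 3) ℤ) _) (AddMonoidAlgebra.single 1 1) = -1
  rw [AddMonoidAlgebra.lift_single]; simp

lemma ev_Tm1 : ev (T (-1)) = -1 := by
  show ((AddMonoidAlgebra.lift ℤ (ZMod 3) ℤ) _) (AddMonoidAlgebra.single (-1) 1) = -1
  rw [AddMonoidAlgebra.lift_single]; simp

lemma ev_C (a : ℤ) : ev (C a) = (a : ZMod 3) := by
  show ((AddMonoidAlgebra.lift ℤ (ZMod 3) ℤ) _) (AddMonoidAlgebra.single 0 a) = _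
  rw [AddMonoidAlgebra.lift_single]; simp

lemma ev_int (a : ℤ) : ev (a : R) = (a : ZMod 3) := by
  rw [← ev_C]; norm_cast

noncomputable instance M3 : Module (LaurentPolynomial ℤ) (ZMod 3) := Module.compHom _ ev

lemma smul3_def (r : R) (x : ZMod 3) : r • x = ev r * x := rfl

noncomputable def f : (R × R) →ₗ[LaurentPolynomial ℤ] ZMod 3 where
  toFun x := ev x.1 + 2 * ev x.2
  map_add' x y := by simp only [Prod.fst_add, Prod.snd_add, map_add]; ring
  map_smul' r x := by
    simp only [Prod.smul_fst, Prod.smul_snd, smul_eq_mul, map_mul, RingHom.id_apply, smul3_def]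
    ring

lemma f_apply (p q : R) : f (p, q) = ev p + 2 * ev q := rfl

noncomputable def Nsp : Submodule R (R × R) :=
  Submodule.span R {(1, T 1 - 1), (-T 1, 1), (1 - T (-1), T (-1))}

lemma v1_mem : ((1, T 1 - 1) : R × R) ∈ Nsp := Submodule.subset_span (by simp)
lemma v2_mem : ((-T 1, 1) : R × R) ∈ Nsp := Submodule.subset_span (by simp)
lemma v3_mem : ((1 - T (-1), T (-1)) : R × R) ∈ Nsp := Submodule.subset_span (by simp)

noncomputable def J : Ideal R := Nsp.comap (LinearMap.inl R R R)

lemma mem_J {r : R} : r ∈ J ↔ ((r, 0) : R × R) ∈ Nsp := Iff.rfl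

lemma htt : (T 1 : R) * T (-1) = 1 := by
  rw [← T_add]; norm_num

lemma h2t1 : (2 * T 1 - 1 : R) ∈ J := by
  rw [mem_J]
  have h := Nsp.add_mem (Nsp.smul_mem (T 1) v3_mem) (Nsp.smul_mem (-1) v2_mem)
  have e : ((2 * T 1 - 1, 0) : R × R)
      = (T 1 : R) • ((1 - T (-1), T (-1)) : R × R) + (-1 : R) • (-T 1, 1) := by
    simp only [Prod.smul_mk, Prod.mk_add_mk, smul_eq_mul, Prod.mk.injEq]
    constructor
    · linear_combination htt
    · linear_combination -htt
  exact e ▸ h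

lemma hq : ((T 1)^2 - T 1 + 1 : R) ∈ J := by
  rw [mem_J]
  have h := Nsp.add_mem v1_mem (Nsp.smul_mem (-(T 1 - 1)) v2_mem)
  have e : (((T 1)^2 - T 1 + 1, 0) : R × R)
      = ((1, T 1 - 1) : R × R) + (-(T 1 - 1) : R) • (-T 1, 1) := by
    simp only [Prod.smul_mk, Prod.mk_add_mk, smul_eq_mul, Prod.mk.injEq]
    constructor <;> ring
  exact e ▸ h

lemma h3 : (3 : R) ∈ J := by
  have h := J.add_mem (J.smul_mem 4 hq) (J.smul_mem (-(2 * T 1 - 1)) h2t1)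
  have e : (3 : R) = (4 : R) • ((T 1)^2 - T 1 + 1 : R) + (-(2 * T 1 - 1) : R) • (2 * T 1 - 1) := by
    simp only [smul_eq_mul]; ring
  exact e ▸ h

lemma ht2 : (T 1 - 2 : R) ∈ J := by
  have h := J.add_mem (J.smul_mem 2 h2t1) (J.smul_mem (-(T 1)) h3)
  have e : (T 1 - 2 : R) = (2 : R) • (2 * T 1 - 1 : R) + (-(T 1) : R) • 3 := by
    simp only [smul_eq_mul]; ring
  exact e ▸ h

lemma ht1 : (T 1 + 1 : R) ∈ J := by
  have h := J.add_mem ht2 h3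
  have e : (T 1 + 1 : R) = (T 1 - 2) + 3 := by ring
  exact e ▸ h

lemma htm1 : (T (-1) + 1 : R) ∈ J := by
  have h := J.smul_mem (T (-1)) ht1
  have e : (T (-1) + 1 : R) = (T (-1) : R) • (T 1 + 1) := by
    simp only [smul_eq_mul]
    linear_combination -htt
  exact e ▸ h


lemma Nsp_le_ker : Nsp ≤ LinearMap.ker f := by
  rw [Nsp, Submodule.span_le]
  intro x hx
  simp only [Set.mem_insert_iff, Set.mem_singleton_iff] at hx
  rcases hx with rfl | rfl | rfl <;>
    simp only [SetLike.mem_coe, LinearMap.mem_ker, f_apply, map_sub, map_add, map_neg,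
      map_one, ev_T1, ev_Tm1] <;> decide

lemma ev_eq_zero_of_mem_J {r : R} (hr : r ∈ J) : ev r = 0 := by
  have h := Nsp_le_ker (mem_J.mp hr)
  simpa [f_apply] using h

lemma Tpow (n : ℤ) : (Even n → (T n : R) - 1 ∈ J) ∧ (¬Even n → (T n : R) + 1 ∈ J) := by
  induction n using Int.induction_on with
  | zero =>
    refine ⟨fun _ => ?_, fun h => absurd Even.zero h⟩
    simp only [T_zero, sub_self]
    exact J.zero_mem
  | succ n ih =>
    have hTsucc : (T ((n : ℤ) + 1) : R) = T n * T 1 := T_add n 1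
    constructor
    · intro h
      have hn : ¬Even (n : ℤ) := by
        rw [Int.even_add_one] at h; exact h
      have h1 := J.add_mem (J.smul_mem (T 1 : R) (ih.2 hn)) (J.smul_mem (-1 : R) ht1)
      have e : (T ((n : ℤ) + 1) : R) - 1
          = (T 1 : R) • ((T n : R) + 1) + (-1 : R) • (T 1 + 1) := by
        simp only [smul_eq_mul, hTsucc]; ring
      exact e ▸ h1
    · intro h
      have hn : Even (n : ℤ) := by
        rw [Int.even_add_one, not_not] at h; exact h
      have h1 := J.add_mem (J.smul_mem (T 1 : R) (ih.1 hn)) ht1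
      have e : (T ((n : ℤ) + 1) : R) + 1
          = (T 1 : R) • ((T n : R) - 1) + (T 1 + 1) := by
        simp only [smul_eq_mul, hTsucc]; ring
      exact e ▸ h1
  | pred n ih =>
    have hTpred : (T (-(n : ℤ) - 1) : R) = T (-n) * T (-1) := T_add (-n) (-1)
    constructor
    · intro h
      have hn : ¬Even (-(n : ℤ)) := by
        simpa [parity_simps] using h
      have h1 := J.add_mem (J.smul_mem (T (-1) : R) (ih.2 hn)) (J.smul_mem (-1 : R) htm1)
      have e : (T (-(n : ℤ) - 1) : R) - 1
          = (T (-1) : R) • ((T (-n) : R) + 1) + (-1 : R) • (T (-1) + 1) := by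
        simp only [smul_eq_mul, hTpred]; ring
      exact e ▸ h1
    · intro h
      have hn : Even (-(n : ℤ)) := by
        simpa [parity_simps] using h
      have h1 := J.add_mem (J.smul_mem (T (-1) : R) (ih.1 hn)) htm1
      have e : (T (-(n : ℤ) - 1) : R) + 1
          = (T (-1) : R) • ((T (-n) : R) - 1) + (T (-1) + 1) := by
        simp only [smul_eq_mul, hTpred]; ring
      exact e ▸ h1

lemma approx (x : R) : ∃ c : ℤ, x - (c : R) ∈ J := by
  induction x using LaurentPolynomial.induction_on' with
  | add p q hp hq =>
    obtain ⟨c, hc⟩ := hp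
    obtain ⟨d, hd⟩ := hq
    refine ⟨c + d, ?_⟩
    have h := J.add_mem hc hd
    have e : p + q - ((c + d : ℤ) : R) = (p - (c : R)) + (q - (d : R)) := by
      push_cast; ring
    exact e ▸ h
  | C_mul_T n a =>
    by_cases h : Even n
    · refine ⟨a, ?_⟩
      have h1 := J.smul_mem (C a) ((Tpow n).1 h)
      have e : C a * T n - ((a : ℤ) : R) = (C a : R) • ((T n : R) - 1) := by
        simp only [smul_eq_mul]
        rw [show ((a : ℤ) : R) = C a by norm_cast]
        ring
      exact e ▸ h1
    · refine ⟨-a, ?_⟩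
      have h1 := J.smul_mem (C a) ((Tpow n).2 h)
      have e : C a * T n - ((-a : ℤ) : R) = (C a : R) • ((T n : R) + 1) := by
        simp only [smul_eq_mul]
        rw [show ((-a : ℤ) : R) = -C a by rw [← map_intCast (C : ℤ →+* R) (-a), Int.cast_id, map_neg]]
        ring
      exact e ▸ h1

lemma mem_J_of_ev_zero {x : R} (hx : ev x = 0) : x ∈ J := by
  obtain ⟨c, hc⟩ := approx x
  have hevc : ((c : ℤ) : ZMod 3) = 0 := by
    have := ev_eq_zero_of_mem_J hc
    rw [map_sub, ev_int, hx, zero_sub, neg_eq_zero] at this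
    exact this
  have hdvd : (3 : ℤ) ∣ c := by
    rwa [ZMod.intCast_zmod_eq_zero_iff_dvd] at hevc
  obtain ⟨k, rfl⟩ := hdvd
  have h1 := J.add_mem hc (J.smul_mem ((k : ℤ) : R) h3)
  have e : x = (x - ((3 * k : ℤ) : R)) + ((k : ℤ) : R) • (3 : R) := by
    simp only [smul_eq_mul]; push_cast; ring
  exact e ▸ h1

lemma ker_f : LinearMap.ker f = Nsp := by
  refine le_antisymm ?_ Nsp_le_ker
  rintro ⟨p, q⟩ hx
  rw [LinearMap.mem_ker, f_apply] at hx
  have hr : ev (p + T 1 * q) = 0 := by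
    rw [map_add, map_mul, ev_T1]
    have : (2 : ZMod 3) = -1 := by decide
    rw [this] at hx
    linear_combination hx
  have h1 := Nsp.add_mem (Nsp.smul_mem q v2_mem) (mem_J.mp (mem_J_of_ev_zero hr))
  have e : ((p, q) : R × R) = q • ((-T 1, 1) : R × R) + (p + T 1 * q, 0) := by
    simp only [Prod.smul_mk, Prod.mk_add_mk, smul_eq_mul, Prod.mk.injEq]
    constructor <;> ring
  exact e ▸ h1

lemma f_surj : Function.Surjective f := by
  intro z
  obtain ⟨k, rfl⟩ := ZMod.intCast_surjective z
  exact ⟨((k : R), 0), by simp [f_apply, ev_int]⟩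

end Stmt7Aux

/-- The reduced Alexander module of the virtual trefoil: over
`R = ℤ[t, t⁻¹]`, the quotient of `R × R` by the submodule spanned by
`(1, T 1 - 1)`, `(-T 1, 1)` and `(1 - T (-1), T (-1))` has exactly 3 elements, and
`t • x = x + x` for every element `x` of the quotient. -/
theorem stmt7
    (N : Submodule (LaurentPolynomial ℤ) (LaurentPolynomial ℤ × LaurentPolynomial ℤ))
    (hN : N = Submodule.span (LaurentPolynomial ℤ)
      {(1, T 1 - 1), (-T 1, 1), (1 - T (-1), T (-1))}) :
    Nat.card ((LaurentPolynomial ℤ × LaurentPolynomial ℤ) ⧸ N) = 3 ∧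
      ∀ x : (LaurentPolynomial ℤ × LaurentPolynomial ℤ) ⧸ N,
        (T 1 : LaurentPolynomial ℤ) • x = x + x := by
  have hNker : N = LinearMap.ker Stmt7Aux.f := hN.trans Stmt7Aux.ker_f.symm
  subst hNker
  constructor
  · have e := Stmt7Aux.f.quotKerEquivOfSurjective Stmt7Aux.f_surj
    rw [Nat.card_congr e.toEquiv]
    simp [Nat.card_eq_fintype_card]
  · intro x
    obtain ⟨y, rfl⟩ := Submodule.Quotient.mk_surjective _ x
    rw [← Submodule.Quotient.mk_smul, ← Submodule.Quotient.mk_add, Submodule.Quotient.eq,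
      LinearMap.mem_ker, map_sub, map_add, LinearMap.map_smul, Stmt7Aux.smul3_def,
      Stmt7Aux.ev_T1]
    have h30 : (3 : ZMod 3) = 0 := by decide
    linear_combination (-(Stmt7Aux.f y)) * h30
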